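/- Let T be a triangle with vertices N, W, S, let C be the midpoint of segment WS (or any interior point of a cevian from N), and subdivide segment NC into k equal-length segments. Then pairwise-disjoint convex quadrilaterals (diamonds) can be drawn, each containing exactly one of these segments as a diagonal, such that all the diamonds are contained in T and their interiors are pairwise disjoint. -/

import Mathlib

noncomputable section

abbrev Pt := EuclideanSpace ℝ (Fin 2)

/-- A diamond: a convex quadrilateral `N, E, S, W` (diagonals `NS` and `WE` cross)
with `|NW| = |NE| = |SW| = |SE|`; `NS` is its diagonal. -/
def Diamond (N E S W : Pt) : Prop :=
  dist N W = dist N E ∧ dist N E = dist S W ∧ dist S W = dist S E ∧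
    N ≠ S ∧ E ≠ W ∧ (openSegment ℝ W E ∩ openSegment ℝ N S).Nonempty

/-- The `i`-th subdivision point of segment `NC` divided into `k` equal parts. -/
def subPt (N C : Pt) (k i : ℕ) : Pt :=
  AffineMap.lineMap N C ((i : ℝ) / (k : ℝ))

open scoped RealInnerProductSpace

private lemma norm_orth {u v : Pt} (h : ⟪u, v⟫ = 0) (s t : ℝ) :
    ‖s • u + t • v‖ = Real.sqrt (s^2*‖u‖^2 + t^2*‖v‖^2) := by
  have h2 : ⟪s • u, t • v⟫ = 0 := by
    rw [real_inner_smul_left, real_inner_smul_right, h]; ring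
  rw [← Real.sqrt_sq (norm_nonneg _)]
  congr 1
  rw [norm_add_sq_real, h2, norm_smul, norm_smul]
  simp [mul_pow, sq_abs]

private lemma interior_lt_of_le {u : Pt} (hu : u ≠ 0) {A : Set Pt} {r : ℝ}
    (hA : ∀ y ∈ A, ⟪u, y⟫ ≤ r) {x : Pt} (hx : x ∈ interior A) : ⟪u, x⟫ < r := by
  obtain ⟨δ, hδ, hball⟩ := Metric.isOpen_iff.mp isOpen_interior x hx
  have hupos : 0 < ‖u‖ := norm_pos_iff.mpr hu
  have hx' : x + (δ / (2*‖u‖)) • u ∈ A := by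
    refine interior_subset (hball ?_)
    have hne : ‖u‖ ≠ 0 := ne_of_gt hupos
    rw [Metric.mem_ball, dist_eq_norm, add_sub_cancel_left, norm_smul, Real.norm_eq_abs,
      abs_of_pos (by positivity)]
    have h5 : δ / (2*‖u‖) * ‖u‖ = δ/2 := by
      field_simp
    rw [h5]
    linarith
  have h1 := hA _ hx'
  rw [inner_add_right, real_inner_smul_right, real_inner_self_eq_norm_sq] at h1
  have h2 : 0 < δ / (2*‖u‖) * ‖u‖^2 := by positivity
  linarith

set_option maxHeartbeats 1000000 in
theorem diamonds_along_cevian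
    (N W S C : Pt) (hT : AffineIndependent ℝ ![N, W, S])
    (hC : C ∈ openSegment ℝ W S) (k : ℕ) (hk : 1 ≤ k) :
    ∃ Ept Wpt : ℕ → Pt,
      ∀ i < k,
        Diamond (subPt N C k i) (Ept i) (subPt N C k (i + 1)) (Wpt i) ∧
        convexHull ℝ ({subPt N C k i, Ept i, subPt N C k (i + 1), Wpt i} : Set Pt) ⊆
          convexHull ℝ ({N, W, S} : Set Pt) ∧
        ∀ j < k, i ≠ j →
          interior (convexHull ℝ
              ({subPt N C k i, Ept i, subPt N C k (i + 1), Wpt i} : Set Pt)) ∩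
            interior (convexHull ℝ
              ({subPt N C k j, Ept j, subPt N C k (j + 1), Wpt j} : Set Pt)) = ∅ := by
  classical
  obtain ⟨a, b, ha, hb, hab, hCab⟩ := hC
  -- N ≠ C
  have hNC : N ≠ C := by
    intro h
    have hmem : C ∈ line[ℝ, W, S] := by
      have hC2 : C = AffineMap.lineMap W S b := by
        rw [AffineMap.lineMap_apply_module, ← hCab, show 1 - b = a by linarith]
      rw [hC2]
      exact AffineMap.lineMap_mem_affineSpan_pair b W S
    exact (affineIndependent_iff_not_collinear_set.mp hT)
      (h ▸ collinear_insert_of_mem_affineSpan_pair hmem)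
  set u : Pt := C - N with hu_def
  have hu : u ≠ 0 := sub_ne_zero.mpr (Ne.symm hNC)
  have hunorm : 0 < ‖u‖ := norm_pos_iff.mpr hu
  set v : Pt := (EuclideanSpace.equiv (Fin 2) ℝ).symm ![-(u 1), u 0] with hv_def
  have huv : ⟪u, v⟫ = 0 := by
    simp [hv_def, PiLp.inner_apply, Fin.sum_univ_two]; ring
  have hvu : ‖v‖ = ‖u‖ := by
    rw [← Real.sqrt_sq (norm_nonneg v), ← Real.sqrt_sq (norm_nonneg u),
      ← real_inner_self_eq_norm_sq, ← real_inner_self_eq_norm_sq]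
    congr 1
    simp [hv_def, PiLp.inner_apply, Fin.sum_univ_two]
    rw [EuclideanSpace.norm_eq, EuclideanSpace.norm_eq]; simp [Fin.sum_univ_two]; ring_nf
  have hvpos : (0:ℝ) < ‖v‖ := hvu ▸ hunorm
  have hv : v ≠ 0 := norm_pos_iff.mp hvpos
  have hkpos : (0:ℝ) < (k:ℝ) := by exact_mod_cast hk
  set c : ℝ := ⟪u, u⟫ with hc_def
  have hcpos : 0 < c := by rw [hc_def, real_inner_self_eq_norm_sq]; positivity
  set cN : ℝ := ⟪u, N⟫ with hcN_def
  -- subdivision points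
  have hP : ∀ i : ℕ, subPt N C k i = ((i:ℝ)/k) • u + N := by
    intro i
    rw [subPt, AffineMap.lineMap_apply_module']
  -- the affine basis and interior membership
  have hspan : affineSpan ℝ (Set.range ![N, W, S]) = ⊤ := by
    rw [hT.affineSpan_eq_top_iff_card_eq_finrank_add_one]
    simp
  set bT : AffineBasis (Fin 3) ℝ Pt := ⟨![N, W, S], hT, hspan⟩ with hbT_def
  have hbT : (bT : Fin 3 → Pt) = ![N, W, S] := rfl
  have hrange : Set.range (bT : Fin 3 → Pt) = ({N, W, S} : Set Pt) := by
    rw [hbT]; ext x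
    simp [Matrix.range_cons, Matrix.range_empty]; tauto
  have hMemInt : ∀ t : ℝ, 0 < t → t < 1 →
      (t • u + N) ∈ interior (convexHull ℝ ({N, W, S} : Set Pt)) := by
    intro t ht0 ht1
    have hsum : (Finset.univ : Finset (Fin 3)).sum ![1-t, t*a, t*b] = 1 := by
      simp [Fin.sum_univ_three]; nlinarith
    have hx : t • u + N = Finset.univ.affineCombination ℝ (bT : Fin 3 → Pt) ![1-t, t*a, t*b] := by
      rw [Finset.affineCombination_eq_linear_combination _ _ _ hsum, hbT]
      simp only [Fin.sum_univ_three, Matrix.cons_val_zero, Matrix.cons_val_one, Matrix.head_cons,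
        Matrix.cons_val_two, Matrix.tail_cons]
      have h1 : (t*a) • W + (t*b) • S = t • (a • W + b • S) := by module
      rw [hu_def]
      calc t • (C - N) + N = (1-t) • N + t • C := by module
        _ = (1-t) • N + ((t*a) • W + (t*b) • S) := by rw [← hCab, h1]
        _ = (1-t) • N + (t*a) • W + (t*b) • S := by module
    rw [← hrange, bT.interior_convexHull]
    intro j
    rw [hx, bT.coord_apply_combination_of_mem (Finset.mem_univ j) hsum]
    fin_cases j
    · simpa using by linarith
    · simpa using by positivity
    · simpa using by positivity
  -- triangle hull facts
  have hTconv : Convex ℝ (convexHull ℝ ({N, W, S} : Set Pt)) := convex_convexHull ℝ _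
  have hNmem : N ∈ convexHull ℝ ({N, W, S} : Set Pt) := subset_convexHull ℝ _ (by simp)
  have hCmem : C ∈ convexHull ℝ ({N, W, S} : Set Pt) := by
    have hWm : W ∈ convexHull ℝ ({N, W, S} : Set Pt) := subset_convexHull ℝ _ (by simp)
    have hSm : S ∈ convexHull ℝ ({N, W, S} : Set Pt) := subset_convexHull ℝ _ (by simp)
    exact hTconv.segment_subset hWm hSm ⟨a, b, ha.le, hb.le, hab, hCab⟩
  have hPmem : ∀ i : ℕ, i ≤ k → subPt N C k i ∈ convexHull ℝ ({N, W, S} : Set Pt) := by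
    intro i hik
    refine hTconv.segment_subset hNmem hCmem ?_
    rw [segment_eq_image_lineMap]
    exact ⟨(i:ℝ)/k, ⟨by positivity, by
      rw [div_le_one hkpos]; exact_mod_cast hik⟩, rfl⟩
  have hlin : IsLinearMap ℝ (fun x : Pt => ⟪u, x⟫) :=
    ⟨fun x y => inner_add_right u x y, fun r x => real_inner_smul_right u x r⟩
  -- main construction
  have main : ∀ i : ℕ, ∃ e w : Pt, i < k →
      Diamond (subPt N C k i) e (subPt N C k (i+1)) w ∧
      convexHull ℝ ({subPt N C k i, e, subPt N C k (i+1), w} : Set Pt) ⊆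
        convexHull ℝ ({N, W, S} : Set Pt) ∧
      (∀ x ∈ convexHull ℝ ({subPt N C k i, e, subPt N C k (i+1), w} : Set Pt),
        (i:ℝ)/k * c + cN ≤ ⟪u, x⟫ ∧ ⟪u, x⟫ ≤ ((i:ℝ)+1)/k * c + cN) := by
    intro i
    by_cases hik : i < k
    swap
    · exact ⟨0, 0, fun h => absurd h hik⟩
    set t : ℝ := ((i:ℝ)/k + ((i:ℝ)+1)/k)/2 with ht_def
    have hdd : ((i:ℝ)+1)/k - (i:ℝ)/k = 1/k := by
      rw [div_sub_div_same]; norm_num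
    have hddpos : (0:ℝ) < 1/k := by positivity
    have ht0 : 0 < t := by
      have : (0:ℝ) ≤ (i:ℝ)/k := by positivity
      rw [ht_def]; linarith
    have hik' : ((i:ℝ)+1)/k ≤ 1 := by
      rw [div_le_one hkpos]; exact_mod_cast hik
    have htlt : (i:ℝ)/k < t := by rw [ht_def]; linarith
    have htlt2 : t < ((i:ℝ)+1)/k := by rw [ht_def]; linarith
    have ht1 : t < 1 := lt_of_lt_of_le htlt2 hik'
    set M : Pt := t • u + N with hM_def
    have hMint := hMemInt t ht0 ht1
    obtain ⟨δ, hδ, hball⟩ := Metric.isOpen_iff.mp isOpen_interior M hMint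
    have hvne : ‖v‖ ≠ 0 := ne_of_gt hvpos
    set ε : ℝ := δ/2 * (‖v‖)⁻¹ with hε_def
    have hεpos : 0 < ε := by positivity
    have hdistε : ‖ε • v‖ = δ/2 := by
      rw [norm_smul, Real.norm_eq_abs, abs_of_pos hεpos, hε_def, mul_assoc,
        inv_mul_cancel₀ hvne, mul_one]
    have hE : M + ε • v ∈ interior (convexHull ℝ ({N, W, S} : Set Pt)) := by
      refine hball ?_
      rw [Metric.mem_ball, dist_eq_norm, add_sub_cancel_left, hdistε]
      linarith
    have hW : M - ε • v ∈ interior (convexHull ℝ ({N, W, S} : Set Pt)) := by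
      refine hball ?_
      rw [Metric.mem_ball, dist_eq_norm]
      rw [show M - ε • v - M = -(ε • v) by abel, norm_neg, hdistε]
      linarith
    refine ⟨M + ε • v, M - ε • v, fun _ => ?_⟩
    -- vector identities
    have e1 : subPt N C k i - (M - ε • v) = (-(1/(2*(k:ℝ)))) • u + ε • v := by
      rw [hP, hM_def, ht_def]; module
    have e2 : subPt N C k i - (M + ε • v) = (-(1/(2*(k:ℝ)))) • u + (-ε) • v := by
      rw [hP, hM_def, ht_def]; module
    have e3 : subPt N C k (i+1) - (M - ε • v) = (1/(2*(k:ℝ))) • u + ε • v := by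
      rw [hP, hM_def, ht_def]; push_cast; module
    have e4 : subPt N C k (i+1) - (M + ε • v) = (1/(2*(k:ℝ))) • u + (-ε) • v := by
      rw [hP, hM_def, ht_def]; push_cast; module
    have hmid : (1/2 : ℝ) • subPt N C k i + (1/2 : ℝ) • subPt N C k (i+1) = M := by
      rw [hP, hP, hM_def, ht_def]; push_cast; module
    -- inner product values at the four vertices
    have fP1 : ⟪u, subPt N C k i⟫ = (i:ℝ)/k * c + cN := by
      rw [hP, inner_add_right, real_inner_smul_right, hc_def, hcN_def]
    have fP2 : ⟪u, subPt N C k (i+1)⟫ = ((i:ℝ)+1)/k * c + cN := by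
      rw [hP, inner_add_right, real_inner_smul_right, hc_def, hcN_def]
      push_cast; ring
    have fM : ∀ s : ℝ, ⟪u, M + s • v⟫ = t * c + cN := by
      intro s
      rw [hM_def, inner_add_right, inner_add_right, real_inner_smul_right,
        real_inner_smul_right, huv, hc_def, hcN_def]
      ring
    have fMw : ⟪u, M - ε • v⟫ = t * c + cN := by
      rw [sub_eq_add_neg, ← neg_smul]; exact fM (-ε)
    -- the diamond
    refine ⟨⟨?_, ?_, ?_, ?_, ?_, ?_⟩, ?_, ?_⟩
    · rw [dist_eq_norm, dist_eq_norm, e1, e2, norm_orth huv, norm_orth huv]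
      congr 1; ring
    · rw [dist_eq_norm, dist_eq_norm, e2, e3, norm_orth huv, norm_orth huv]
      congr 1; ring
    · rw [dist_eq_norm, dist_eq_norm, e3, e4, norm_orth huv, norm_orth huv]
      congr 1; ring
    · -- subPt i ≠ subPt (i+1)
      intro h
      rw [hP, hP] at h
      push_cast at h
      have h2 : ((i:ℝ)/k) • u = (((i:ℝ)+1)/k) • u := add_right_cancel h
      have h3 : ((((i:ℝ)+1)/k) - (i:ℝ)/k) • u = 0 := by
        rw [sub_smul, ← h2, sub_self]
      rw [hdd] at h3
      rcases smul_eq_zero.mp h3 with h4 | h4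
      · exact absurd h4 (ne_of_gt hddpos)
      · exact hu h4
    · -- E ≠ W
      intro h
      rw [sub_eq_add_neg] at h
      have h2 := add_left_cancel h
      rw [eq_neg_iff_add_eq_zero, ← two_smul ℝ] at h2
      rcases smul_eq_zero.mp h2 with h4 | h4
      · norm_num at h4
      · rcases smul_eq_zero.mp h4 with h5 | h5
        · exact absurd h5 (ne_of_gt hεpos)
        · exact hv h5
    · -- open segments intersect at M
      refine ⟨M, ⟨1/2, 1/2, by norm_num, by norm_num, by norm_num, by module⟩,
        ⟨1/2, 1/2, by norm_num, by norm_num, by norm_num, hmid⟩⟩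
    · -- hull inside triangle
      apply convexHull_min _ hTconv
      intro x hx
      simp only [Set.mem_insert_iff, Set.mem_singleton_iff] at hx
      rcases hx with h | h | h | h
      · exact h ▸ hPmem i hik.le
      · exact h ▸ interior_subset hE
      · exact h ▸ hPmem (i+1) hik
      · exact h ▸ interior_subset hW
    · -- slab bounds
      intro x hx
      have hconvS : Convex ℝ {y : Pt | (i:ℝ)/k * c + cN ≤ ⟪u, y⟫ ∧ ⟪u, y⟫ ≤ ((i:ℝ)+1)/k * c + cN} :=
        (convex_halfSpace_ge hlin ((i:ℝ)/k * c + cN)).inter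
          (convex_halfSpace_le hlin (((i:ℝ)+1)/k * c + cN))
      have hsubS : convexHull ℝ ({subPt N C k i, M + ε • v, subPt N C k (i+1), M - ε • v} : Set Pt)
          ⊆ {y : Pt | (i:ℝ)/k * c + cN ≤ ⟪u, y⟫ ∧ ⟪u, y⟫ ≤ ((i:ℝ)+1)/k * c + cN} := by
        apply convexHull_min _ hconvS
        intro y hy
        simp only [Set.mem_insert_iff, Set.mem_singleton_iff] at hy
        simp only [Set.mem_setOf_eq]
        have key1 : (i:ℝ)/k * c ≤ t * c := mul_le_mul_of_nonneg_right htlt.le hcpos.le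
        have key2 : t * c ≤ ((i:ℝ)+1)/k * c := mul_le_mul_of_nonneg_right htlt2.le hcpos.le
        have key3 : (i:ℝ)/k * c ≤ ((i:ℝ)+1)/k * c :=
          mul_le_mul_of_nonneg_right (by linarith) hcpos.le
        rcases hy with h | h | h | h
        · rw [h, fP1]; exact ⟨le_refl _, by linarith⟩
        · rw [h, fM]; exact ⟨by linarith, by linarith⟩
        · rw [h, fP2]; exact ⟨by linarith, le_refl _⟩
        · rw [h, fMw]
          exact ⟨by linarith, by linarith⟩
      exact hsubS hx
  choose Ept Wpt hmain using main
  refine ⟨Ept, Wpt, fun i hik => ?_⟩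
  obtain ⟨hd, hsub, hslab⟩ := hmain i hik
  refine ⟨hd, hsub, fun j hjk hij => ?_⟩
  obtain ⟨_, _, hslabj⟩ := hmain j hjk
  rw [Set.eq_empty_iff_forall_notMem]
  rintro x ⟨hxi, hxj⟩
  have hhi : ⟪u, x⟫ < ((i:ℝ)+1)/k * c + cN :=
    interior_lt_of_le hu (fun y hy => (hslab y hy).2) hxi
  have hhij : ⟪u, x⟫ < ((j:ℝ)+1)/k * c + cN :=
    interior_lt_of_le hu (fun y hy => (hslabj y hy).2) hxj
  have hlo : ∀ (m : ℕ) (A : Set Pt), (∀ y ∈ A, (m:ℝ)/k * c + cN ≤ ⟪u, y⟫) →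
      x ∈ interior A → (m:ℝ)/k * c + cN < ⟪u, x⟫ := by
    intro m A hA hx
    have h := interior_lt_of_le (u := -u) (neg_ne_zero.mpr hu) (A := A)
      (r := -((m:ℝ)/k * c + cN)) ?_ hx
    · rw [inner_neg_left] at h; linarith
    · intro y hy
      rw [inner_neg_left]
      have := hA y hy
      linarith
  have hloi := hlo i _ (fun y hy => (hslab y hy).1) hxi
  have hloj := hlo j _ (fun y hy => (hslabj y hy).1) hxj
  have hkpos2 : (0:ℝ) < (k:ℝ) := hkpos
  rcases lt_or_gt_of_ne hij with h | h
  · have hle : ((i:ℝ)+1)/k ≤ (j:ℝ)/k := by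
      have : ((i:ℝ)+1) ≤ (j:ℝ) := by exact_mod_cast h
      gcongr
    nlinarith
  · have hle : ((j:ℝ)+1)/k ≤ (i:ℝ)/k := by
      have : ((j:ℝ)+1) ≤ (i:ℝ) := by exact_mod_cast h
      gcongr
    nlinarith

end
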